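/- Let N ≥ 1 and let s be an invertible element of a field K of characteristic zero, q = s². Define the quantum trigonometric R-matrix R(q) as the N²×N² matrix R(q) = 1 + Σ_{k,l} [(q - q⁻¹)·θ(l-k) + ((s - s⁻¹)²/2)·δ_{k,l}]·E_{k,l} ⊗ E_{l,k}, where θ(x)=1 for x>0, θ(0)=1/2, θ(x)=0 for x<0. Then R(q)·R(q⁻¹) = 1, i.e. the inverse of R(q) is obtained by the substitution q ↦ q⁻¹ (and s ↦ s⁻¹). -/

import Mathlib

open Matrix Kronecker

/-- The step function θ with values in a field: θ(x)=1 for x>0, θ(0)=1/2, θ(x)=0 for x<0. -/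
noncomputable def thetaK (K : Type*) [Field K] (x : ℤ) : K :=
  if 0 < x then 1 else if x = 0 then 2⁻¹ else 0

/-- The quantum trigonometric R-matrix
`R(q) = 1 + Σ_{k,l} [(q-q⁻¹)θ(l-k) + ((s-s⁻¹)²/2)δ_{k,l}]·E_{k,l} ⊗ E_{l,k}`, with `q = s²`. -/
noncomputable def Rq (N : ℕ) (K : Type*) [Field K] (q s : K) :
    Matrix (Fin N × Fin N) (Fin N × Fin N) K :=
  1 + ∑ k : Fin N, ∑ l : Fin N,
    ((q - q⁻¹) * thetaK K ((l : ℤ) - (k : ℤ))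
        + (s - s⁻¹) ^ 2 / 2 * (if k = l then 1 else 0)) •
      (Matrix.single k l (1 : K) ⊗ₖ Matrix.single l k (1 : K))

/-- `R(q)·R(q⁻¹) = 1`, the inverse of the quantum trigonometric R-matrix
being obtained by the substitution `q ↦ q⁻¹`, `s ↦ s⁻¹`. -/
theorem Rq_mul_Rq_inv (N : ℕ) (hN : 1 ≤ N) (K : Type*) [Field K] [CharZero K]
    (s : K) (hs : s ≠ 0) (q : K) (hq : q = s ^ 2) :
    Rq N K q s * Rq N K q⁻¹ s⁻¹ = 1 := by
  classical
  have hs' : s⁻¹ ≠ 0 := inv_ne_zero hs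
  have hq0 : q ≠ 0 := by rw [hq]; exact pow_ne_zero 2 hs
  -- coefficient function
  set c : K → K → Fin N → Fin N → K := fun q s k l =>
    (q - q⁻¹) * thetaK K ((l : ℤ) - (k : ℤ))
      + (s - s⁻¹) ^ 2 / 2 * (if k = l then 1 else 0) with hc
  set E : Fin N → Fin N → Matrix (Fin N × Fin N) (Fin N × Fin N) K := fun k l =>
    Matrix.single k l (1 : K) ⊗ₖ Matrix.single l k (1 : K) with hE
  set D : Fin N → Fin N → Matrix (Fin N × Fin N) (Fin N × Fin N) K := fun k l =>
    Matrix.single k k (1 : K) ⊗ₖ Matrix.single l l (1 : K) with hD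
  set M : Matrix (Fin N × Fin N) (Fin N × Fin N) K :=
    ∑ k : Fin N, ∑ l : Fin N, c q s k l • E k l with hM
  set M' : Matrix (Fin N × Fin N) (Fin N × Fin N) K :=
    ∑ k : Fin N, ∑ l : Fin N, c q⁻¹ s⁻¹ k l • E k l with hM'
  have hRq : Rq N K q s = 1 + M := rfl
  have hRq' : Rq N K q⁻¹ s⁻¹ = 1 + M' := rfl
  rw [hRq, hRq']
  -- product of basis matrices
  have hprod : ∀ k l k' l' : Fin N,
      E k l * E k' l' = if k' = l ∧ l' = k then D k l else 0 := by
    intro k l k' l'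
    rw [hE, hD]
    simp only
    rw [← Matrix.mul_kronecker_mul]
    by_cases h1 : k' = l
    · subst h1
      by_cases h2 : l' = k
      · subst h2
        simp [Matrix.single_mul_single_same]
      · simp [show k ≠ l' from fun h => h2 h.symm, h2]
    · simp [show l ≠ k' from fun h => h1 h.symm, h1]
  have hMM : M * M' = ∑ k : Fin N, ∑ l : Fin N,
      (c q s k l * c q⁻¹ s⁻¹ l k) • D k l := by
    rw [hM, hM', Finset.sum_mul]
    refine Finset.sum_congr rfl fun k _ => ?_
    rw [Finset.sum_mul]
    refine Finset.sum_congr rfl fun l _ => ?_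
    rw [Finset.mul_sum]
    rw [show (∑ k' : Fin N, (c q s k l • E k l) * ∑ l' : Fin N, c q⁻¹ s⁻¹ k' l' • E k' l')
        = ∑ k' : Fin N, ∑ l' : Fin N, (c q s k l * c q⁻¹ s⁻¹ k' l') • (E k l * E k' l') by
      refine Finset.sum_congr rfl fun k' _ => ?_
      rw [Finset.mul_sum]
      refine Finset.sum_congr rfl fun l' _ => ?_
      rw [smul_mul_smul_comm]]
    simp only [hprod, smul_ite, smul_zero]
    rw [Finset.sum_comm]
    rw [Finset.sum_eq_single k]
    · rw [Finset.sum_eq_single l]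
      · simp
      · intro b _ hb; rw [if_neg (by tauto)]
      · intro h; exact absurd (Finset.mem_univ l) h
    · intro b _ hb
      apply Finset.sum_eq_zero
      intro x _
      rw [if_neg (by tauto)]
    · intro h; exact absurd (Finset.mem_univ k) h
  have key : M + M' + M * M' = 0 := by
    rw [hMM, hM, hM']
    rw [← Finset.sum_add_distrib, ← Finset.sum_add_distrib]
    apply Finset.sum_eq_zero
    intro k _
    rw [← Finset.sum_add_distrib, ← Finset.sum_add_distrib]
    apply Finset.sum_eq_zero
    intro l _
    by_cases hkl : k = l
    · subst hkl
      have hEkk : E k k = D k k := rfl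
      rw [hEkk, ← add_smul, ← add_smul]
      convert zero_smul K (D k k)
      have hth : thetaK K ((k : ℤ) - (k : ℤ)) = 2⁻¹ := by
        simp [thetaK]
      rw [hc]
      simp only [if_pos rfl, ↓reduceIte, hth, inv_inv]
      rw [hq]
      have h2 : (2 : K) ≠ 0 := two_ne_zero
      field_simp
      ring
    · have h1 : c q s k l + c q⁻¹ s⁻¹ k l = 0 := by
        rw [hc]
        simp only [if_neg hkl, inv_inv, mul_zero, add_zero]
        ring
      have hne : ((l : ℤ) - (k : ℤ)) ≠ 0 := fun h => hkl (Fin.ext (by omega))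
      have h2 : c q s k l * c q⁻¹ s⁻¹ l k = 0 := by
        rcases hne.lt_or_gt with h | h
        · have h0 : c q s k l = 0 := by
            rw [hc]
            simp only []
            rw [show thetaK K ((l : ℤ) - (k : ℤ)) = 0 from by
              unfold thetaK; rw [if_neg (by omega), if_neg (by omega)], if_neg hkl]
            ring
          rw [h0, zero_mul]
        · have h0 : c q⁻¹ s⁻¹ l k = 0 := by
            rw [hc]
            simp only []
            rw [show thetaK K ((k : ℤ) - (l : ℤ)) = 0 from by
              unfold thetaK; rw [if_neg (by omega), if_neg (by omega)], if_neg (Ne.symm hkl)]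
            ring
          rw [h0, mul_zero]
      rw [← add_smul, h1, h2, zero_smul, zero_smul, add_zero]
  calc (1 + M) * (1 + M')
      = 1 + (M + M' + M * M') := by noncomm_ring
    _ = 1 := by rw [key, add_zero]
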